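/- (First-order payoff consistency.) In the setting of the previous statement, assume additionally that either (a) ρ > L with L = L_g(1 + L_s) and g is bounded, or (b) ρ > L + K where K is the linear-growth constant of g. Then there exist C > 0 and h₀ > 0 such that |W_h(x) - W(x)| ≤ C h for all 0 < h ≤ h₀. -/

import Mathlib

open Real MeasureTheory

set_option maxHeartbeats 2000000


lemma one_sub_pow_le (r : ℝ) (h0 : 0 ≤ r) (h1 : r ≤ 1) (k : ℕ) :
    1 - r ^ k ≤ k * (1 - r) := by
  induction k with
  | zero => simp
  | succ k ih =>
    have hrk : r ^ k ≤ 1 := pow_le_one₀ h0 h1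
    have hex : 1 - r ^ (k + 1) = (1 - r) + r * (1 - r ^ k) := by ring
    rw [hex]
    push_cast
    nlinarith [mul_le_mul_of_nonneg_left ih h0, sq_nonneg (1 - r),
      mul_nonneg (Nat.cast_nonneg (α := ℝ) k) (by linarith : (0:ℝ) ≤ 1 - r)]

lemma euler_step_arith (L lam A h ek kk : ℝ) (hL : 0 ≤ L) (hlam : 0 ≤ lam) (hA : 0 ≤ A)
    (hh : 0 < h) (hh1 : h ≤ 1) (hk : 0 ≤ kk) (he : 0 ≤ ek)
    (ih : ek ≤ L * A * Real.exp lam * h * ((kk * h) * Real.exp ((L + lam) * (kk * h)))) :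
    ek + (L * (ek + A * Real.exp (lam * ((kk + 1) * h)) * h)) * h ≤
      L * A * Real.exp lam * h * (((kk + 1) * h) * Real.exp ((L + lam) * ((kk + 1) * h))) := by
  have hE1 : (1 + L * h) ≤ Real.exp ((L + lam) * h) := by
    calc 1 + L * h ≤ Real.exp (L * h) := by linarith [Real.add_one_le_exp (L * h)]
      _ ≤ Real.exp ((L + lam) * h) := by
          apply Real.exp_le_exp.2; nlinarith
  have hE2 : Real.exp (lam * ((kk + 1) * h)) ≤
      Real.exp lam * Real.exp ((L + lam) * ((kk + 1) * h)) := by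
    calc Real.exp (lam * ((kk + 1) * h)) ≤ Real.exp ((L + lam) * ((kk + 1) * h)) := by
          apply Real.exp_le_exp.2
          nlinarith [mul_nonneg hL (mul_nonneg (by linarith : (0:ℝ) ≤ kk + 1) hh.le)]
      _ ≤ Real.exp lam * Real.exp ((L + lam) * ((kk + 1) * h)) := by
          nlinarith [Real.one_le_exp hlam, Real.exp_pos ((L + lam) * ((kk + 1) * h))]
  have key1 : (1 + L * h) * ek ≤
      L * A * Real.exp lam * h * ((kk * h) * Real.exp ((L + lam) * ((kk + 1) * h))) := by
    calc (1 + L * h) * ek ≤ Real.exp ((L + lam) * h) *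
          (L * A * Real.exp lam * h * ((kk * h) * Real.exp ((L + lam) * (kk * h)))) := by
          apply mul_le_mul hE1 ih he (le_of_lt (Real.exp_pos _))
      _ = L * A * Real.exp lam * h * ((kk * h) *
            (Real.exp ((L + lam) * h) * Real.exp ((L + lam) * (kk * h)))) := by ring
      _ = L * A * Real.exp lam * h * ((kk * h) * Real.exp ((L + lam) * ((kk + 1) * h))) := by
          rw [← Real.exp_add]; ring_nf
  have key2 : (L * (A * Real.exp (lam * ((kk + 1) * h)) * h)) * h ≤
      L * A * Real.exp lam * h * (h * Real.exp ((L + lam) * ((kk + 1) * h))) := by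
    calc (L * (A * Real.exp (lam * ((kk + 1) * h)) * h)) * h
        = L * h * h * (A * Real.exp (lam * ((kk + 1) * h))) := by ring
      _ ≤ L * h * h * (A * (Real.exp lam * Real.exp ((L + lam) * ((kk + 1) * h)))) :=
          mul_le_mul_of_nonneg_left (mul_le_mul_of_nonneg_left hE2 hA) (by positivity)
      _ = (L * (A * (Real.exp lam * Real.exp ((L + lam) * ((kk + 1) * h))) * h)) * h := by ring
      _ = L * A * Real.exp lam * h * (h * Real.exp ((L + lam) * ((kk + 1) * h))) := by ring
  have expand : ek + (L * (ek + A * Real.exp (lam * ((kk + 1) * h)) * h)) * h =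
      (1 + L * h) * ek + (L * (A * Real.exp (lam * ((kk + 1) * h)) * h)) * h := by ring
  rw [expand]
  calc (1 + L * h) * ek + (L * (A * Real.exp (lam * ((kk + 1) * h)) * h)) * h
      ≤ L * A * Real.exp lam * h * ((kk * h) * Real.exp ((L + lam) * ((kk + 1) * h))) +
        L * A * Real.exp lam * h * (h * Real.exp ((L + lam) * ((kk + 1) * h))) :=
        add_le_add key1 key2
    _ = L * A * Real.exp lam * h * (((kk + 1) * h) * Real.exp ((L + lam) * ((kk + 1) * h))) := by
        ring


/-- First-order payoff consistency: under `ρ > L` with `g` bounded, or `ρ > L + K`,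
`|W_h(x) - W(x)| ≤ C h` for all sufficiently small `h > 0`, where `L = L_g (1 + L_s)`
and `K` is the linear-growth constant of `g`. -/
theorem payoff_consistency_first_order (n m : ℕ) (ρ M Lf Lg Ls K : ℝ)
    (hρ : 0 < ρ) (hM : 0 ≤ M) (hLf : 0 ≤ Lf) (hLg : 0 ≤ Lg) (hLs : 0 ≤ Ls) (hK : 0 ≤ K)
    (V : Set (EuclideanSpace ℝ (Fin n))) (U : Set (EuclideanSpace ℝ (Fin m)))
    (f : EuclideanSpace ℝ (Fin n) → EuclideanSpace ℝ (Fin m) → ℝ)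
    (g : EuclideanSpace ℝ (Fin n) → EuclideanSpace ℝ (Fin m) → EuclideanSpace ℝ (Fin n))
    (Φ : EuclideanSpace ℝ (Fin n) → EuclideanSpace ℝ (Fin m))
    (hf : ∀ a ∈ V, ∀ u ∈ U, ∀ a' ∈ V, ∀ u' ∈ U,
      |f a u - f a' u'| ≤ Lf * (‖a - a'‖ + ‖u - u'‖))
    (hg : ∀ a ∈ V, ∀ u ∈ U, ∀ a' ∈ V, ∀ u' ∈ U,
      ‖g a u - g a' u'‖ ≤ Lg * (‖a - a'‖ + ‖u - u'‖))
    (hfM : ∀ a ∈ V, ∀ u ∈ U, |f a u| ≤ M)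
    (hΦlip : ∀ a a', ‖Φ a - Φ a'‖ ≤ Ls * ‖a - a'‖)
    (hΦU : ∀ a ∈ V, Φ a ∈ U)
    -- linear growth constant of g on V × U
    (hgrow : ∀ a ∈ V, ∀ u ∈ U, ‖g a u‖ ≤ K * (1 + ‖a‖))
    -- either ρ > L with g bounded, or ρ > L + K, where L = Lg (1 + Ls)
    (hcase : (Lg * (1 + Ls) < ρ ∧ ∃ Mg : ℝ, ∀ a ∈ V, ∀ u ∈ U, ‖g a u‖ ≤ Mg) ∨
      Lg * (1 + Ls) + K < ρ)
    (x : EuclideanSpace ℝ (Fin n)) (hx : x ∈ V)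
    (y : ℝ → EuclideanSpace ℝ (Fin n))
    (hy0 : y 0 = x)
    (hyV : ∀ t ≥ (0:ℝ), y t ∈ V)
    (hy : ∀ t ≥ (0:ℝ), HasDerivAt y (g (y t) (Φ (y t))) t)
    (yseq : ℝ → ℕ → EuclideanSpace ℝ (Fin n))
    (hseq0 : ∀ h : ℝ, 0 < h → yseq h 0 = x)
    (hseqV : ∀ h : ℝ, 0 < h → ∀ k : ℕ, yseq h k ∈ V)
    (hseq : ∀ h : ℝ, 0 < h → ∀ k : ℕ,
      yseq h (k + 1) = yseq h k + h • g (yseq h k) (Φ (yseq h k))) :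
    ∃ C > (0:ℝ), ∃ h₀ > (0:ℝ), ∀ h : ℝ, 0 < h → h ≤ h₀ →
      |h * (∑' k : ℕ, (1 - ρ * h) ^ k * f (yseq h k) (Φ (yseq h k))) -
          ∫ t in Set.Ioi (0:ℝ), Real.exp (-ρ * t) * f (y t) (Φ (y t))| ≤ C * h := by
  classical
  set L : ℝ := Lg * (1 + Ls) with hLdef
  have hL0 : 0 ≤ L := by positivity
  set F : ℝ := Lf * (1 + Ls) with hFdef
  have hF0 : 0 ≤ F := by positivity
  -- Lipschitz estimates for the composed maps
  have hGlip : ∀ a ∈ V, ∀ b ∈ V, ‖g a (Φ a) - g b (Φ b)‖ ≤ L * ‖a - b‖ := by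
    intro a ha b hb
    have h1 := hg a ha (Φ a) (hΦU a ha) b hb (Φ b) (hΦU b hb)
    have h2 := hΦlip a b
    have := mul_le_mul_of_nonneg_left h2 hLg
    nlinarith [norm_nonneg (a - b)]
  have hFlip : ∀ a ∈ V, ∀ b ∈ V, |f a (Φ a) - f b (Φ b)| ≤ F * ‖a - b‖ := by
    intro a ha b hb
    have h1 := hf a ha (Φ a) (hΦU a ha) b hb (Φ b) (hΦU b hb)
    have h2 := hΦlip a b
    have := mul_le_mul_of_nonneg_left h2 hLf
    nlinarith [norm_nonneg (a - b)]
  -- uniform growth data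
  obtain ⟨A, lam, hA0, hlam0, hρδ, HC, HD⟩ :
      ∃ A lam : ℝ, 0 ≤ A ∧ 0 ≤ lam ∧ L + lam < ρ ∧
        (∀ t ≥ (0:ℝ), ‖g (y t) (Φ (y t))‖ ≤ A * Real.exp (lam * t)) ∧
        (∀ h : ℝ, 0 < h → ∀ k : ℕ,
          ‖g (yseq h k) (Φ (yseq h k))‖ ≤ A * Real.exp (lam * (k * h))) := by
    have hdgrow : ∀ (K' : ℝ), 0 ≤ K' → (∀ a ∈ V, ‖g a (Φ a)‖ ≤ K' * (1 + ‖a‖)) →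
        ∀ h : ℝ, 0 < h → ∀ k : ℕ,
          ‖g (yseq h k) (Φ (yseq h k))‖ ≤ K' * (1 + ‖x‖) * Real.exp (K' * (k * h)) := by
      intro K' hK' hgr h hh
      have key : ∀ k : ℕ, 1 + ‖yseq h k‖ ≤ (1 + ‖x‖) * (1 + K' * h) ^ k := by
        intro k
        induction k with
        | zero => simp [hseq0 h hh]
        | succ k ih =>
          have h1 : ‖yseq h (k+1)‖ ≤ ‖yseq h k‖ + h * ‖g (yseq h k) (Φ (yseq h k))‖ := by
            rw [hseq h hh k]
            calc ‖yseq h k + h • g (yseq h k) (Φ (yseq h k))‖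
                ≤ ‖yseq h k‖ + ‖h • g (yseq h k) (Φ (yseq h k))‖ := norm_add_le _ _
              _ = ‖yseq h k‖ + h * ‖g (yseq h k) (Φ (yseq h k))‖ := by
                  rw [norm_smul, Real.norm_eq_abs, abs_of_pos hh]
          have h2 := hgr (yseq h k) (hseqV h hh k)
          have h3 : 1 + ‖yseq h (k+1)‖ ≤ (1 + K' * h) * (1 + ‖yseq h k‖) := by nlinarith
          calc 1 + ‖yseq h (k+1)‖ ≤ (1 + K' * h) * (1 + ‖yseq h k‖) := h3
            _ ≤ (1 + K' * h) * ((1 + ‖x‖) * (1 + K' * h) ^ k) := by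
                apply mul_le_mul_of_nonneg_left ih; positivity
            _ = (1 + ‖x‖) * (1 + K' * h) ^ (k + 1) := by ring
      intro k
      calc ‖g (yseq h k) (Φ (yseq h k))‖ ≤ K' * (1 + ‖yseq h k‖) :=
            hgr (yseq h k) (hseqV h hh k)
        _ ≤ K' * ((1 + ‖x‖) * (1 + K' * h) ^ k) :=
            mul_le_mul_of_nonneg_left (key k) hK'
        _ ≤ K' * ((1 + ‖x‖) * Real.exp (K' * (k * h))) := by
            apply mul_le_mul_of_nonneg_left _ hK'
            apply mul_le_mul_of_nonneg_left _ (by positivity)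
            calc (1 + K' * h) ^ k ≤ (Real.exp (K' * h)) ^ k := by
                  apply pow_le_pow_left₀ (by positivity)
                  linarith [Real.add_one_le_exp (K' * h)]
              _ = Real.exp (K' * (k * h)) := by rw [← Real.exp_nat_mul]; ring_nf
        _ = K' * (1 + ‖x‖) * Real.exp (K' * (k * h)) := by ring
    rcases hcase with ⟨hLρ, Mg, hMg⟩ | hLKρ
    · refine ⟨max Mg 0, 0, le_max_right _ _, le_rfl, by simpa using hLρ, ?_, ?_⟩
      · intro t ht
        simp only [zero_mul, Real.exp_zero, mul_one]
        exact le_trans (hMg (y t) (hyV t ht) (Φ (y t)) (hΦU _ (hyV t ht))) (le_max_left _ _)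
      · intro h hh k
        simp only [zero_mul, Real.exp_zero, mul_one]
        exact le_trans (hMg (yseq h k) (hseqV h hh k) (Φ (yseq h k)) (hΦU _ (hseqV h hh k)))
          (le_max_left _ _)
    · rcases eq_or_lt_of_le hK with hK0 | hKpos
      · refine ⟨0, 0, le_rfl, le_rfl, by simpa using by linarith, ?_, ?_⟩
        · intro t ht
          have := hgrow (y t) (hyV t ht) (Φ (y t)) (hΦU _ (hyV t ht))
          rw [← hK0] at this; simpa using this
        · intro h hh k
          have := hgrow (yseq h k) (hseqV h hh k) (Φ (yseq h k)) (hΦU _ (hseqV h hh k))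
          rw [← hK0] at this; simpa using this
      · refine ⟨K * (1 + ‖x‖), K, by positivity, hK, by linarith, ?_, ?_⟩
        · intro t ht
          have hyb : 1 + ‖y t‖ ≤ (1 + ‖x‖) * Real.exp (K * t) := by
            have hb := norm_le_gronwallBound_of_norm_deriv_right_le (f := y)
              (f' := fun s => g (y s) (Φ (y s)))
              (δ := ‖x‖) (K := K) (ε := K) (a := 0) (b := t)
              (fun s hs => (hy s hs.1).continuousAt.continuousWithinAt)
              (fun s hs => (hy s hs.1).hasDerivWithinAt)
              (by rw [hy0])
              (fun s hs => by
                have := hgrow (y s) (hyV s hs.1) (Φ (y s)) (hΦU _ (hyV s hs.1))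
                linarith [this])
            have hbt := hb t ⟨ht, le_rfl⟩
            rw [gronwallBound_of_K_ne_0 (ne_of_gt hKpos)] at hbt
            simp only [sub_zero] at hbt
            have hd : K / K = 1 := div_self (ne_of_gt hKpos)
            rw [hd] at hbt; linarith
          calc ‖g (y t) (Φ (y t))‖ ≤ K * (1 + ‖y t‖) :=
                hgrow (y t) (hyV t ht) (Φ (y t)) (hΦU _ (hyV t ht))
            _ ≤ K * ((1 + ‖x‖) * Real.exp (K * t)) :=
                mul_le_mul_of_nonneg_left hyb hK
            _ = K * (1 + ‖x‖) * Real.exp (K * t) := by ring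
        · exact hdgrow K hK
            (fun a ha => hgrow a ha (Φ a) (hΦU a ha))
  set δ' : ℝ := ρ - (L + lam) with hδdef
  have hδ0 : 0 < δ' := by simp [hδdef]; linarith
  have hδρ : δ' ≤ ρ := by simp [hδdef]; linarith
  -- continuity along the trajectory
  have hycont : ContinuousOn y (Set.Ici 0) :=
    fun t ht => (hy t ht).continuousAt.continuousWithinAt
  have hGV : LipschitzOnWith (Real.toNNReal L) (fun a => g a (Φ a)) V := by
    apply LipschitzOnWith.of_dist_le_mul
    intro a ha b hb
    rw [dist_eq_norm, dist_eq_norm]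
    calc ‖g a (Φ a) - g b (Φ b)‖ ≤ L * ‖a - b‖ := hGlip a ha b hb
      _ = (Real.toNNReal L) * ‖a - b‖ := by rw [Real.coe_toNNReal L hL0]
  have hfV : LipschitzOnWith (Real.toNNReal F) (fun a => f a (Φ a)) V := by
    apply LipschitzOnWith.of_dist_le_mul
    intro a ha b hb
    rw [Real.dist_eq, dist_eq_norm]
    calc |f a (Φ a) - f b (Φ b)| ≤ F * ‖a - b‖ := hFlip a ha b hb
      _ = (Real.toNNReal F) * ‖a - b‖ := by rw [Real.coe_toNNReal F hF0]
  have hGcont : ContinuousOn (fun t => g (y t) (Φ (y t))) (Set.Ici (0:ℝ)) :=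
    hGV.continuousOn.comp hycont (fun t ht => hyV t ht)
  have hfcont : ContinuousOn (fun t => f (y t) (Φ (y t))) (Set.Ici (0:ℝ)) :=
    hfV.continuousOn.comp hycont (fun t ht => hyV t ht)
  have hφcont : ContinuousOn (fun t => Real.exp (-ρ * t) * f (y t) (Φ (y t)))
      (Set.Ici (0:ℝ)) :=
    (Continuous.continuousOn (by continuity)).mul hfcont
  -- fundamental theorem of calculus along the trajectory
  have hFTC : ∀ s t : ℝ, 0 ≤ s → s ≤ t →
      y t - y s = ∫ τ in s..t, g (y τ) (Φ (y τ)) := by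
    intro s t hs hst
    have hint : IntervalIntegrable (fun τ => g (y τ) (Φ (y τ))) volume s t := by
      apply ContinuousOn.intervalIntegrable
      apply hGcont.mono
      rw [Set.uIcc_of_le hst]
      intro τ hτ
      exact le_trans hs hτ.1
    exact (intervalIntegral.integral_eq_sub_of_hasDerivAt
      (fun τ hτ => hy τ (le_trans hs ((Set.uIcc_of_le hst ▸ hτ).1))) hint).symm
  -- Lipschitz-type bound on y
  have hyLip : ∀ s t : ℝ, 0 ≤ s → s ≤ t →
      ‖y t - y s‖ ≤ A * Real.exp (lam * t) * (t - s) := by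
    intro s t hs hst
    rw [hFTC s t hs hst]
    have hb := intervalIntegral.norm_integral_le_of_norm_le_const
      (C := A * Real.exp (lam * t)) (f := fun τ => g (y τ) (Φ (y τ))) (a := s) (b := t)
      (fun τ hτ => by
        rw [Set.uIoc_of_le hst] at hτ
        calc ‖g (y τ) (Φ (y τ))‖ ≤ A * Real.exp (lam * τ) :=
              HC τ (le_trans hs hτ.1.le)
          _ ≤ A * Real.exp (lam * t) := by
              apply mul_le_mul_of_nonneg_left _ hA0
              exact Real.exp_le_exp.2 (mul_le_mul_of_nonneg_left hτ.2 hlam0))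
    rwa [abs_of_nonneg (by linarith : (0:ℝ) ≤ t - s)] at hb
  set C1 : ℝ := L * A * Real.exp lam with hC1def
  have hC10 : 0 ≤ C1 := by positivity
  set D : ℝ := F * C1 + M * (2 * ρ ^ 2 + ρ) + F * A * Real.exp lam with hDdef
  have hD0 : 0 ≤ D := by positivity
  refine ⟨max 1 (D * ((1 + δ') ^ 2 / δ' ^ 2 + (1 + δ') / δ')), lt_of_lt_of_le one_pos (le_max_left _ _),
    min 1 (1 / (2 * ρ)), by positivity, ?_⟩
  intro h hh hhle
  have hh1 : h ≤ 1 := le_trans hhle (min_le_left _ _)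
  have hh2 : ρ * h ≤ 1 / 2 := by
    have := le_trans hhle (min_le_right _ _)
    rw [le_div_iff₀ (by positivity)] at this ⊢; nlinarith
  have hr0 : 0 < 1 - ρ * h := by linarith
  have hr1 : 1 - ρ * h < 1 := by nlinarith
  -- Euler error estimate
  have herr : ∀ k : ℕ, ‖yseq h k - y (k * h)‖ ≤
      C1 * h * ((k * h) * Real.exp ((L + lam) * (k * h))) := by
    intro k
    induction k with
    | zero => simp [hseq0 h hh, hy0]
    | succ k ih =>
      have hk0 : (0:ℝ) ≤ (k:ℝ) * h := by positivity
      have hk1 : (k:ℝ) * h ≤ ((k:ℝ) + 1) * h := by nlinarith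
      have hintG : IntervalIntegrable (fun τ => g (y τ) (Φ (y τ))) volume
          ((k:ℝ) * h) (((k:ℝ) + 1) * h) := by
        apply ContinuousOn.intervalIntegrable
        apply hGcont.mono
        rw [Set.uIcc_of_le hk1]
        exact fun τ hτ => le_trans hk0 hτ.1
      have hid : yseq h (k+1) - y (((k:ℝ) + 1) * h) =
          (yseq h k - y ((k:ℝ) * h)) + ∫ τ in ((k:ℝ) * h)..(((k:ℝ) + 1) * h),
            (g (yseq h k) (Φ (yseq h k)) - g (y τ) (Φ (y τ))) := by
        rw [intervalIntegral.integral_sub intervalIntegrable_const hintG,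
          ← hFTC ((k:ℝ) * h) (((k:ℝ) + 1) * h) hk0 hk1,
          intervalIntegral.integral_const, hseq h hh k]
        have hsm : ((((k:ℝ) + 1) * h - (k:ℝ) * h)) • g (yseq h k) (Φ (yseq h k)) =
            h • g (yseq h k) (Φ (yseq h k)) := by
          congr 1; ring
        rw [hsm]; abel
      have hIbound : ‖∫ τ in ((k:ℝ) * h)..(((k:ℝ) + 1) * h),
          (g (yseq h k) (Φ (yseq h k)) - g (y τ) (Φ (y τ)))‖ ≤
          (L * (‖yseq h k - y ((k:ℝ) * h)‖ +
            A * Real.exp (lam * (((k:ℝ) + 1) * h)) * h)) * h := by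
        have hb := intervalIntegral.norm_integral_le_of_norm_le_const
          (C := L * (‖yseq h k - y ((k:ℝ) * h)‖ +
            A * Real.exp (lam * (((k:ℝ) + 1) * h)) * h))
          (f := fun τ => g (yseq h k) (Φ (yseq h k)) - g (y τ) (Φ (y τ)))
          (a := (k:ℝ) * h) (b := ((k:ℝ) + 1) * h)
          (fun τ hτ => by
            rw [Set.uIoc_of_le hk1] at hτ
            have hτ0 : (0:ℝ) ≤ τ := le_trans hk0 hτ.1.le
            calc ‖g (yseq h k) (Φ (yseq h k)) - g (y τ) (Φ (y τ))‖
                ≤ L * ‖yseq h k - y τ‖ := hGlip _ (hseqV h hh k) _ (hyV τ hτ0)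
              _ ≤ L * (‖yseq h k - y ((k:ℝ) * h)‖ +
                  A * Real.exp (lam * (((k:ℝ) + 1) * h)) * h) := by
                  apply mul_le_mul_of_nonneg_left _ hL0
                  have hsplit : yseq h k - y τ =
                      (yseq h k - y ((k:ℝ) * h)) + (y ((k:ℝ) * h) - y τ) := by abel
                  calc ‖yseq h k - y τ‖
                      ≤ ‖yseq h k - y ((k:ℝ) * h)‖ + ‖y ((k:ℝ) * h) - y τ‖ := by
                        rw [hsplit]; exact norm_add_le _ _
                    _ ≤ ‖yseq h k - y ((k:ℝ) * h)‖ +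
                        A * Real.exp (lam * (((k:ℝ) + 1) * h)) * h := by
                        apply add_le_add le_rfl
                        rw [norm_sub_rev]
                        calc ‖y τ - y ((k:ℝ) * h)‖
                            ≤ A * Real.exp (lam * τ) * (τ - (k:ℝ) * h) :=
                              hyLip ((k:ℝ) * h) τ hk0 hτ.1.le
                          _ ≤ A * Real.exp (lam * (((k:ℝ) + 1) * h)) * h := by
                              apply mul_le_mul
                              · apply mul_le_mul_of_nonneg_left _ hA0
                                exact Real.exp_le_exp.2
                                  (mul_le_mul_of_nonneg_left hτ.2 hlam0)
                              · nlinarith [hτ.2]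
                              · linarith [hτ.1]
                              · positivity)
        have habs : |(((k:ℝ) + 1) * h) - ((k:ℝ) * h)| = h := by
          rw [abs_of_nonneg (by linarith)]; ring
        rwa [habs] at hb
      have hcast : ((k + 1 : ℕ) : ℝ) = (k:ℝ) + 1 := by push_cast; ring
      rw [hcast, hid]
      calc ‖(yseq h k - y ((k:ℝ) * h)) + ∫ τ in ((k:ℝ) * h)..(((k:ℝ) + 1) * h),
            (g (yseq h k) (Φ (yseq h k)) - g (y τ) (Φ (y τ)))‖
          ≤ ‖yseq h k - y ((k:ℝ) * h)‖ + ‖∫ τ in ((k:ℝ) * h)..(((k:ℝ) + 1) * h),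
            (g (yseq h k) (Φ (yseq h k)) - g (y τ) (Φ (y τ)))‖ := norm_add_le _ _
        _ ≤ ‖yseq h k - y ((k:ℝ) * h)‖ + (L * (‖yseq h k - y ((k:ℝ) * h)‖ +
            A * Real.exp (lam * (((k:ℝ) + 1) * h)) * h)) * h := by linarith [hIbound]
        _ ≤ C1 * h * ((((k:ℝ) + 1) * h) * Real.exp ((L + lam) * (((k:ℝ) + 1) * h))) := by
            rw [hC1def] at ih ⊢
            exact euler_step_arith L lam A h _ (k:ℝ) hL0 hlam0 hA0 hh hh1
              (Nat.cast_nonneg k) (norm_nonneg _) ih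
  -- the integral splits as a sum over the intervals
  have hφint : IntegrableOn (fun t => Real.exp (-ρ * t) * f (y t) (Φ (y t))) (Set.Ioi 0) := by
    have hmeas : AEStronglyMeasurable (fun t => Real.exp (-ρ * t) * f (y t) (Φ (y t)))
        (volume.restrict (Set.Ioi 0)) :=
      (hφcont.mono (Set.Ioi_subset_Ici le_rfl)).aestronglyMeasurable measurableSet_Ioi
    apply Integrable.mono' ((exp_neg_integrableOn_Ioi 0 hρ).const_mul M) hmeas
    rw [ae_restrict_iff' measurableSet_Ioi]
    apply ae_of_all
    intro t ht
    rw [Real.norm_eq_abs, abs_mul, abs_of_pos (Real.exp_pos _)]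
    calc Real.exp (-ρ * t) * |f (y t) (Φ (y t))|
        ≤ Real.exp (-ρ * t) * M := mul_le_mul_of_nonneg_left
          (hfM _ (hyV t ht.le) _ (hΦU _ (hyV t ht.le))) (le_of_lt (Real.exp_pos _))
      _ = M * Real.exp (-ρ * t) := mul_comm _ _
  have hUnion : (⋃ k : ℕ, Set.Ioc ((k:ℝ) * h) (((k:ℝ) + 1) * h)) = Set.Ioi 0 := by
    ext t
    simp only [Set.mem_iUnion, Set.mem_Ioc, Set.mem_Ioi]
    constructor
    · rintro ⟨k, hk1, hk2⟩
      have : (0:ℝ) ≤ (k:ℝ) * h := by positivity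
      linarith
    · intro ht
      have hth : 0 < t / h := div_pos ht hh
      have hk1 : 1 ≤ Nat.ceil (t / h) := Nat.ceil_pos.2 hth
      refine ⟨Nat.ceil (t / h) - 1, ?_, ?_⟩
      · have hlt : ((Nat.ceil (t / h) - 1 : ℕ) : ℝ) < t / h := by
          rw [← Nat.lt_ceil]
          exact Nat.pred_lt (Nat.one_le_iff_ne_zero.1 hk1)
        calc ((Nat.ceil (t / h) - 1 : ℕ) : ℝ) * h < (t / h) * h :=
              mul_lt_mul_of_pos_right hlt hh
          _ = t := by field_simp
      · have hle : t / h ≤ ((Nat.ceil (t / h) - 1 : ℕ) : ℝ) + 1 := by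
          rw [Nat.cast_sub hk1]
          push_cast
          linarith [Nat.le_ceil (t / h)]
        calc t = (t / h) * h := by field_simp
          _ ≤ (((Nat.ceil (t / h) - 1 : ℕ) : ℝ) + 1) * h :=
              mul_le_mul_of_nonneg_right hle hh.le
  have hdisj : Pairwise (Function.onFun Disjoint
      (fun k : ℕ => Set.Ioc ((k:ℝ) * h) (((k:ℝ) + 1) * h))) := by
    intro i j hij
    simp only [Function.onFun]
    rw [Set.Ioc_disjoint_Ioc]
    rcases lt_or_gt_of_ne hij with hlt | hlt
    · refine le_trans (min_le_left _ _) (le_trans ?_ (le_max_right _ _))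
      have hc : ((i:ℝ) + 1) ≤ (j:ℝ) := by exact_mod_cast hlt
      nlinarith
    · refine le_trans (min_le_right _ _) (le_trans ?_ (le_max_left _ _))
      have hc : ((j:ℝ) + 1) ≤ (i:ℝ) := by exact_mod_cast hlt
      nlinarith
  have hbHasSum : HasSum
      (fun k : ℕ => ∫ t in Set.Ioc ((k:ℝ) * h) (((k:ℝ) + 1) * h),
        Real.exp (-ρ * t) * f (y t) (Φ (y t)))
      (∫ t in Set.Ioi (0:ℝ), Real.exp (-ρ * t) * f (y t) (Φ (y t))) := by
    have := hasSum_integral_iUnion (μ := volume)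
      (f := fun t => Real.exp (-ρ * t) * f (y t) (Φ (y t)))
      (s := fun k : ℕ => Set.Ioc ((k:ℝ) * h) (((k:ℝ) + 1) * h))
      (fun k => measurableSet_Ioc) hdisj (hUnion ▸ hφint)
    rwa [hUnion] at this
  -- summability of the discrete payoff
  have hsummable : Summable (fun k : ℕ => (1 - ρ * h) ^ k * f (yseq h k) (Φ (yseq h k))) := by
    apply Summable.of_norm_bounded (g := fun k : ℕ => M * (1 - ρ * h) ^ k)
      ((summable_geometric_of_lt_one hr0.le hr1).mul_left M)
    intro k
    rw [Real.norm_eq_abs, abs_mul, abs_pow, abs_of_pos hr0, mul_comm M]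
    exact mul_le_mul_of_nonneg_left
      (hfM _ (hseqV h hh k) _ (hΦU _ (hseqV h hh k))) (by positivity)
  set q : ℝ := Real.exp (-(δ' * h)) with hqdef
  have hq0 : 0 < q := Real.exp_pos _
  have hq1 : q < 1 := by
    rw [hqdef, Real.exp_lt_one_iff]; nlinarith
  have hexp2 : Real.exp (ρ * h) ≤ 2 := by
    have h1 : 1 - ρ * h ≤ Real.exp (-(ρ * h)) := by
      linarith [Real.add_one_le_exp (-(ρ * h))]
    have h2 : Real.exp (ρ * h) * (1 - ρ * h) ≤ 1 := by
      have h3 : Real.exp (ρ * h) * (1 - ρ * h) ≤ Real.exp (ρ * h) * Real.exp (-(ρ * h)) :=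
        mul_le_mul_of_nonneg_left h1 (Real.exp_pos _).le
      rwa [← Real.exp_add, add_neg_cancel, Real.exp_zero] at h3
    nlinarith [Real.exp_pos (ρ * h)]
  -- per-interval estimate
  have hkey : ∀ k : ℕ,
      |h * ((1 - ρ * h) ^ k * f (yseq h k) (Φ (yseq h k))) -
        ∫ t in Set.Ioc ((k:ℝ) * h) (((k:ℝ) + 1) * h),
          Real.exp (-ρ * t) * f (y t) (Φ (y t))| ≤
        D * h ^ 2 * (((k:ℝ) * h + 1) * q ^ k) := by
    intro k
    have hk0 : (0:ℝ) ≤ (k:ℝ) * h := by positivity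
    have hk1 : (k:ℝ) * h ≤ ((k:ℝ) + 1) * h := by nlinarith
    have hkV : yseq h k ∈ V := hseqV h hh k
    have hykV : y ((k:ℝ) * h) ∈ V := hyV _ hk0
    have hE0pos : (0:ℝ) < Real.exp (-ρ * ((k:ℝ) * h)) := Real.exp_pos _
    -- (1-ρh)^k ≤ e^{-ρ k h}
    have hbp : (1 - ρ * h) ^ k ≤ Real.exp (-ρ * ((k:ℝ) * h)) := by
      calc (1 - ρ * h) ^ k ≤ (Real.exp (-(ρ * h))) ^ k := by
            apply pow_le_pow_left₀ hr0.le
            linarith [Real.add_one_le_exp (-(ρ * h))]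
        _ = Real.exp (-ρ * ((k:ℝ) * h)) := by
            rw [← Real.exp_nat_mul]; congr 1; push_cast; ring
    -- e^{-ρ k h} - (1-ρh)^k ≤ 2 k ρ² h² e^{-ρ k h}
    have hpd : Real.exp (-ρ * ((k:ℝ) * h)) - (1 - ρ * h) ^ k ≤
        (k:ℝ) * (2 * ρ ^ 2 * h ^ 2) * Real.exp (-ρ * ((k:ℝ) * h)) := by
      have hr_le1 : (1 - ρ * h) * Real.exp (ρ * h) ≤ 1 := by
        have h1 : 1 - ρ * h ≤ Real.exp (-(ρ * h)) := by
          linarith [Real.add_one_le_exp (-(ρ * h))]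
        have h3 : (1 - ρ * h) * Real.exp (ρ * h) ≤ Real.exp (-(ρ * h)) * Real.exp (ρ * h) :=
          mul_le_mul_of_nonneg_right h1 (Real.exp_pos _).le
        rwa [← Real.exp_add, neg_add_cancel, Real.exp_zero] at h3
      have hr_ge0 : (0:ℝ) ≤ (1 - ρ * h) * Real.exp (ρ * h) := by positivity
      have hA1 : Real.exp (-(ρ * h)) - (1 - ρ * h) ≤ (ρ * h) ^ 2 := by
        have e1 := Real.add_one_le_exp (ρ * h)
        have e2 := Real.add_one_le_exp (-(ρ * h))
        have hp := Real.exp_pos (-(ρ * h))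
        have e3 : Real.exp (-(ρ * h)) * (ρ * h + 1) ≤ 1 := by
          have h4 : Real.exp (-(ρ * h)) * (ρ * h + 1) ≤
              Real.exp (-(ρ * h)) * Real.exp (ρ * h) :=
            mul_le_mul_of_nonneg_left e1 hp.le
          rwa [← Real.exp_add, neg_add_cancel, Real.exp_zero] at h4
        have m1 : (ρ * h) * (1 - Real.exp (-(ρ * h))) ≤ (ρ * h) * (ρ * h) :=
          mul_le_mul_of_nonneg_left (by linarith) (by positivity)
        nlinarith [e3, m1]
      have h1mr : 1 - (1 - ρ * h) * Real.exp (ρ * h) ≤ 2 * ρ ^ 2 * h ^ 2 := by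
        have hid3 : 1 - (1 - ρ * h) * Real.exp (ρ * h) =
            Real.exp (ρ * h) * (Real.exp (-(ρ * h)) - (1 - ρ * h)) := by
          rw [mul_sub, ← Real.exp_add, add_neg_cancel, Real.exp_zero]; ring
        rw [hid3]
        have hnn : (0:ℝ) ≤ Real.exp (-(ρ * h)) - (1 - ρ * h) := by
          linarith [Real.add_one_le_exp (-(ρ * h))]
        calc Real.exp (ρ * h) * (Real.exp (-(ρ * h)) - (1 - ρ * h))
            ≤ 2 * (Real.exp (-(ρ * h)) - (1 - ρ * h)) :=
              mul_le_mul_of_nonneg_right hexp2 hnn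
          _ ≤ 2 * (ρ * h) ^ 2 := by linarith [hA1]
          _ = 2 * ρ ^ 2 * h ^ 2 := by ring
      have honep : 1 - ((1 - ρ * h) * Real.exp (ρ * h)) ^ k ≤
          (k:ℝ) * (1 - (1 - ρ * h) * Real.exp (ρ * h)) :=
        one_sub_pow_le _ hr_ge0 hr_le1 k
      have hid2 : (1 - ρ * h) ^ k =
          Real.exp (-ρ * ((k:ℝ) * h)) * ((1 - ρ * h) * Real.exp (ρ * h)) ^ k := by
        have hone : Real.exp (-ρ * ((k:ℝ) * h)) * (Real.exp (ρ * h)) ^ k = 1 := by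
          rw [← Real.exp_nat_mul, ← Real.exp_add,
            show -ρ * ((k:ℝ) * h) + (k:ℕ) * (ρ * h) = 0 by push_cast; ring, Real.exp_zero]
        calc (1 - ρ * h) ^ k
            = (1 - ρ * h) ^ k * (Real.exp (-ρ * ((k:ℝ) * h)) * (Real.exp (ρ * h)) ^ k) := by
              rw [hone, mul_one]
          _ = Real.exp (-ρ * ((k:ℝ) * h)) * ((1 - ρ * h) * Real.exp (ρ * h)) ^ k := by
              rw [mul_pow]; ring
      rw [hid2]
      have step1 : Real.exp (-ρ * ((k:ℝ) * h)) -
          Real.exp (-ρ * ((k:ℝ) * h)) * ((1 - ρ * h) * Real.exp (ρ * h)) ^ k =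
          Real.exp (-ρ * ((k:ℝ) * h)) * (1 - ((1 - ρ * h) * Real.exp (ρ * h)) ^ k) := by ring
      rw [step1]
      calc Real.exp (-ρ * ((k:ℝ) * h)) * (1 - ((1 - ρ * h) * Real.exp (ρ * h)) ^ k)
          ≤ Real.exp (-ρ * ((k:ℝ) * h)) * ((k:ℝ) * (1 - (1 - ρ * h) * Real.exp (ρ * h))) :=
            mul_le_mul_of_nonneg_left honep hE0pos.le
        _ ≤ Real.exp (-ρ * ((k:ℝ) * h)) * ((k:ℝ) * (2 * ρ ^ 2 * h ^ 2)) := by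
            apply mul_le_mul_of_nonneg_left _ hE0pos.le
            exact mul_le_mul_of_nonneg_left h1mr (Nat.cast_nonneg k)
        _ = (k:ℝ) * (2 * ρ ^ 2 * h ^ 2) * Real.exp (-ρ * ((k:ℝ) * h)) := by ring
    -- pointwise estimate on the interval
    have hpt : ∀ t ∈ Set.Ioc ((k:ℝ) * h) (((k:ℝ) + 1) * h),
        ‖(1 - ρ * h) ^ k * f (yseq h k) (Φ (yseq h k)) -
          Real.exp (-ρ * t) * f (y t) (Φ (y t))‖ ≤
        Real.exp (-ρ * ((k:ℝ) * h)) * (F * ‖yseq h k - y ((k:ℝ) * h)‖) +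
        ((k:ℝ) * (2 * ρ ^ 2 * h ^ 2) * Real.exp (-ρ * ((k:ℝ) * h)) +
          ρ * h * Real.exp (-ρ * ((k:ℝ) * h))) * M +
        Real.exp (-ρ * ((k:ℝ) * h)) *
          (F * (A * Real.exp (lam * (((k:ℝ) + 1) * h)) * h)) := by
      intro t ht
      have ht0 : (0:ℝ) ≤ t := le_trans hk0 ht.1.le
      have hyt : y t ∈ V := hyV t ht0
      have hexpt : Real.exp (-ρ * t) ≤ Real.exp (-ρ * ((k:ℝ) * h)) :=
        Real.exp_le_exp.2 (by nlinarith [ht.1])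
      have hexptlow : Real.exp (-ρ * ((k:ℝ) * h)) - Real.exp (-ρ * t) ≤
          ρ * h * Real.exp (-ρ * ((k:ℝ) * h)) := by
        have hsplit : Real.exp (-ρ * t) =
            Real.exp (-ρ * ((k:ℝ) * h)) * Real.exp (-(ρ * (t - (k:ℝ) * h))) := by
          rw [← Real.exp_add]; congr 1; ring
        have h1 : 1 - ρ * (t - (k:ℝ) * h) ≤ Real.exp (-(ρ * (t - (k:ℝ) * h))) := by
          linarith [Real.add_one_le_exp (-(ρ * (t - (k:ℝ) * h)))]
        have h2 : ρ * (t - (k:ℝ) * h) ≤ ρ * h := by nlinarith [ht.2]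
        rw [hsplit]
        nlinarith [mul_le_mul_of_nonneg_left
          (show 1 - Real.exp (-(ρ * (t - (k:ℝ) * h))) ≤ ρ * h by linarith) hE0pos.le]
      have habsf1 : |f (yseq h k) (Φ (yseq h k)) - f (y ((k:ℝ) * h)) (Φ (y ((k:ℝ) * h)))| ≤
          F * ‖yseq h k - y ((k:ℝ) * h)‖ := hFlip _ hkV _ hykV
      have habsf2 : |f (y ((k:ℝ) * h)) (Φ (y ((k:ℝ) * h))) - f (y t) (Φ (y t))| ≤
          F * (A * Real.exp (lam * (((k:ℝ) + 1) * h)) * h) := by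
        calc |f (y ((k:ℝ) * h)) (Φ (y ((k:ℝ) * h))) - f (y t) (Φ (y t))|
            ≤ F * ‖y ((k:ℝ) * h) - y t‖ := hFlip _ hykV _ hyt
          _ = F * ‖y t - y ((k:ℝ) * h)‖ := by rw [norm_sub_rev]
          _ ≤ F * (A * Real.exp (lam * (((k:ℝ) + 1) * h)) * h) := by
              apply mul_le_mul_of_nonneg_left _ hF0
              calc ‖y t - y ((k:ℝ) * h)‖
                  ≤ A * Real.exp (lam * t) * (t - (k:ℝ) * h) := hyLip _ t hk0 ht.1.le
                _ ≤ A * Real.exp (lam * (((k:ℝ) + 1) * h)) * h := by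
                    apply mul_le_mul
                    · exact mul_le_mul_of_nonneg_left
                        (Real.exp_le_exp.2 (mul_le_mul_of_nonneg_left ht.2 hlam0)) hA0
                    · nlinarith [ht.2]
                    · linarith [ht.1]
                    · positivity
      have hfM2 : |f (y ((k:ℝ) * h)) (Φ (y ((k:ℝ) * h)))| ≤ M := hfM _ hykV _ (hΦU _ hykV)
      have hdiff2 : |(1 - ρ * h) ^ k - Real.exp (-ρ * t)| ≤
          (k:ℝ) * (2 * ρ ^ 2 * h ^ 2) * Real.exp (-ρ * ((k:ℝ) * h)) +
            ρ * h * Real.exp (-ρ * ((k:ℝ) * h)) := by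
        rw [abs_sub_le_iff]
        constructor
        · have hnn : (0:ℝ) ≤ (k:ℝ) * (2 * ρ ^ 2 * h ^ 2) * Real.exp (-ρ * ((k:ℝ) * h)) := by
            positivity
          linarith [hexptlow, hbp]
        · have hnn : (0:ℝ) ≤ ρ * h * Real.exp (-ρ * ((k:ℝ) * h)) := by positivity
          linarith [hpd, hexpt]
      rw [Real.norm_eq_abs]
      have hdec : (1 - ρ * h) ^ k * f (yseq h k) (Φ (yseq h k)) -
          Real.exp (-ρ * t) * f (y t) (Φ (y t)) =
          (1 - ρ * h) ^ k *
            (f (yseq h k) (Φ (yseq h k)) - f (y ((k:ℝ) * h)) (Φ (y ((k:ℝ) * h)))) +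
          ((1 - ρ * h) ^ k - Real.exp (-ρ * t)) * f (y ((k:ℝ) * h)) (Φ (y ((k:ℝ) * h))) +
          Real.exp (-ρ * t) *
            (f (y ((k:ℝ) * h)) (Φ (y ((k:ℝ) * h))) - f (y t) (Φ (y t))) := by ring
      rw [hdec]
      have hT1 : |(1 - ρ * h) ^ k *
          (f (yseq h k) (Φ (yseq h k)) - f (y ((k:ℝ) * h)) (Φ (y ((k:ℝ) * h))))| ≤
          Real.exp (-ρ * ((k:ℝ) * h)) * (F * ‖yseq h k - y ((k:ℝ) * h)‖) := by
        rw [abs_mul, abs_pow, abs_of_pos hr0]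
        exact mul_le_mul hbp habsf1 (abs_nonneg _) hE0pos.le
      have hT2 : |((1 - ρ * h) ^ k - Real.exp (-ρ * t)) *
          f (y ((k:ℝ) * h)) (Φ (y ((k:ℝ) * h)))| ≤
          ((k:ℝ) * (2 * ρ ^ 2 * h ^ 2) * Real.exp (-ρ * ((k:ℝ) * h)) +
            ρ * h * Real.exp (-ρ * ((k:ℝ) * h))) * M := by
        rw [abs_mul]
        exact mul_le_mul hdiff2 hfM2 (abs_nonneg _) (by positivity)
      have hT3 : |Real.exp (-ρ * t) *
          (f (y ((k:ℝ) * h)) (Φ (y ((k:ℝ) * h))) - f (y t) (Φ (y t)))| ≤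
          Real.exp (-ρ * ((k:ℝ) * h)) *
            (F * (A * Real.exp (lam * (((k:ℝ) + 1) * h)) * h)) := by
        rw [abs_mul, abs_of_pos (Real.exp_pos _)]
        exact mul_le_mul hexpt habsf2 (abs_nonneg _) hE0pos.le
      calc |(1 - ρ * h) ^ k *
            (f (yseq h k) (Φ (yseq h k)) - f (y ((k:ℝ) * h)) (Φ (y ((k:ℝ) * h)))) +
          ((1 - ρ * h) ^ k - Real.exp (-ρ * t)) * f (y ((k:ℝ) * h)) (Φ (y ((k:ℝ) * h))) +
          Real.exp (-ρ * t) *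
            (f (y ((k:ℝ) * h)) (Φ (y ((k:ℝ) * h))) - f (y t) (Φ (y t)))|
          ≤ |(1 - ρ * h) ^ k *
            (f (yseq h k) (Φ (yseq h k)) - f (y ((k:ℝ) * h)) (Φ (y ((k:ℝ) * h)))) +
          ((1 - ρ * h) ^ k - Real.exp (-ρ * t)) * f (y ((k:ℝ) * h)) (Φ (y ((k:ℝ) * h)))| +
          |Real.exp (-ρ * t) *
            (f (y ((k:ℝ) * h)) (Φ (y ((k:ℝ) * h))) - f (y t) (Φ (y t)))| := abs_add_le _ _
        _ ≤ |(1 - ρ * h) ^ k *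
            (f (yseq h k) (Φ (yseq h k)) - f (y ((k:ℝ) * h)) (Φ (y ((k:ℝ) * h))))| +
          |((1 - ρ * h) ^ k - Real.exp (-ρ * t)) * f (y ((k:ℝ) * h)) (Φ (y ((k:ℝ) * h)))| +
          |Real.exp (-ρ * t) *
            (f (y ((k:ℝ) * h)) (Φ (y ((k:ℝ) * h))) - f (y t) (Φ (y t)))| := by
            linarith [abs_add_le ((1 - ρ * h) ^ k *
              (f (yseq h k) (Φ (yseq h k)) - f (y ((k:ℝ) * h)) (Φ (y ((k:ℝ) * h)))))
              (((1 - ρ * h) ^ k - Real.exp (-ρ * t)) *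
                f (y ((k:ℝ) * h)) (Φ (y ((k:ℝ) * h))))]
        _ ≤ _ := by linarith [hT1, hT2, hT3]
    -- interval integrability of φ on the piece
    have hφII : IntervalIntegrable (fun t => Real.exp (-ρ * t) * f (y t) (Φ (y t))) volume
        ((k:ℝ) * h) (((k:ℝ) + 1) * h) := by
      apply ContinuousOn.intervalIntegrable
      apply hφcont.mono
      rw [Set.uIcc_of_le hk1]
      exact fun τ hτ => le_trans hk0 hτ.1
    rw [← intervalIntegral.integral_of_le hk1]
    have hconst : ∫ t in ((k:ℝ) * h)..(((k:ℝ) + 1) * h),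
        ((1 - ρ * h) ^ k * f (yseq h k) (Φ (yseq h k))) =
        h * ((1 - ρ * h) ^ k * f (yseq h k) (Φ (yseq h k))) := by
      rw [intervalIntegral.integral_const, smul_eq_mul,
        show ((k:ℝ) + 1) * h - (k:ℝ) * h = h by ring]
    rw [← hconst, ← intervalIntegral.integral_sub intervalIntegrable_const hφII]
    have hb := intervalIntegral.norm_integral_le_of_norm_le_const
      (C := Real.exp (-ρ * ((k:ℝ) * h)) * (F * ‖yseq h k - y ((k:ℝ) * h)‖) +
        ((k:ℝ) * (2 * ρ ^ 2 * h ^ 2) * Real.exp (-ρ * ((k:ℝ) * h)) +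
          ρ * h * Real.exp (-ρ * ((k:ℝ) * h))) * M +
        Real.exp (-ρ * ((k:ℝ) * h)) *
          (F * (A * Real.exp (lam * (((k:ℝ) + 1) * h)) * h)))
      (f := fun t => (1 - ρ * h) ^ k * f (yseq h k) (Φ (yseq h k)) -
        Real.exp (-ρ * t) * f (y t) (Φ (y t)))
      (a := (k:ℝ) * h) (b := ((k:ℝ) + 1) * h)
      (fun t htmem => hpt t (Set.uIoc_of_le hk1 ▸ htmem))
    rw [Real.norm_eq_abs, show |((k:ℝ) + 1) * h - (k:ℝ) * h| = h by
      rw [abs_of_nonneg (by linarith)]; ring] at hb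
    refine le_trans hb ?_
    -- final arithmetic: P * h ≤ D h² (kh+1) q^k
    have hqk : ∀ c : ℝ, Real.exp (c * ((k:ℝ) * h)) = (Real.exp (c * h)) ^ k := by
      intro c
      rw [← Real.exp_nat_mul]; congr 1; push_cast; ring
    have hqkX : Real.exp (-ρ * ((k:ℝ) * h)) * Real.exp ((L + lam) * ((k:ℝ) * h)) = q ^ k := by
      rw [← Real.exp_add, hqdef, ← Real.exp_nat_mul]
      congr 1
      rw [hδdef]; push_cast; ring
    have hE0leQ : Real.exp (-ρ * ((k:ℝ) * h)) ≤ q ^ k := by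
      rw [hqdef, ← Real.exp_nat_mul]
      apply Real.exp_le_exp.2
      rw [hδdef]
      push_cast
      nlinarith [mul_nonneg (mul_nonneg hL0 (Nat.cast_nonneg (α := ℝ) k)) hh.le,
        mul_nonneg (mul_nonneg hlam0 (Nat.cast_nonneg (α := ℝ) k)) hh.le]
    have hE0lam : Real.exp (-ρ * ((k:ℝ) * h)) * Real.exp (lam * ((k:ℝ) * h)) ≤ q ^ k := by
      rw [← Real.exp_add, hqdef, ← Real.exp_nat_mul]
      apply Real.exp_le_exp.2
      rw [hδdef]
      push_cast
      nlinarith [mul_nonneg (mul_nonneg hL0 (Nat.cast_nonneg (α := ℝ) k)) hh.le]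
    have hqpos : (0:ℝ) < q ^ k := by positivity
    have g1 : Real.exp (-ρ * ((k:ℝ) * h)) * (F * ‖yseq h k - y ((k:ℝ) * h)‖) * h ≤
        F * C1 * h ^ 2 * (((k:ℝ) * h + 1) * q ^ k) := by
      calc Real.exp (-ρ * ((k:ℝ) * h)) * (F * ‖yseq h k - y ((k:ℝ) * h)‖) * h
          ≤ Real.exp (-ρ * ((k:ℝ) * h)) *
            (F * (C1 * h * (((k:ℝ) * h) * Real.exp ((L + lam) * ((k:ℝ) * h))))) * h := by
            apply mul_le_mul_of_nonneg_right _ hh.le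
            exact mul_le_mul_of_nonneg_left
              (mul_le_mul_of_nonneg_left (herr k) hF0) hE0pos.le
        _ = F * C1 * h ^ 2 * (((k:ℝ) * h) *
            (Real.exp (-ρ * ((k:ℝ) * h)) * Real.exp ((L + lam) * ((k:ℝ) * h)))) := by ring
        _ = F * C1 * h ^ 2 * (((k:ℝ) * h) * q ^ k) := by rw [hqkX]
        _ ≤ F * C1 * h ^ 2 * (((k:ℝ) * h + 1) * q ^ k) := by
            apply mul_le_mul_of_nonneg_left _ (by positivity)
            apply mul_le_mul_of_nonneg_right _ hqpos.le
            linarith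
    have big1 : (k:ℝ) * (2 * ρ ^ 2 * h ^ 2) * Real.exp (-ρ * ((k:ℝ) * h)) * h ≤
        2 * ρ ^ 2 * h ^ 2 * (((k:ℝ) * h + 1) * q ^ k) := by
      calc (k:ℝ) * (2 * ρ ^ 2 * h ^ 2) * Real.exp (-ρ * ((k:ℝ) * h)) * h
          = 2 * ρ ^ 2 * h ^ 2 * (((k:ℝ) * h) * Real.exp (-ρ * ((k:ℝ) * h))) := by ring
        _ ≤ 2 * ρ ^ 2 * h ^ 2 * (((k:ℝ) * h + 1) * q ^ k) := by
            apply mul_le_mul_of_nonneg_left _ (by positivity)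
            apply mul_le_mul (by linarith) hE0leQ hE0pos.le (by positivity)
    have big2 : ρ * h * Real.exp (-ρ * ((k:ℝ) * h)) * h ≤
        ρ * h ^ 2 * (((k:ℝ) * h + 1) * q ^ k) := by
      calc ρ * h * Real.exp (-ρ * ((k:ℝ) * h)) * h
          = ρ * h ^ 2 * Real.exp (-ρ * ((k:ℝ) * h)) := by ring
        _ ≤ ρ * h ^ 2 * (((k:ℝ) * h + 1) * q ^ k) := by
            apply mul_le_mul_of_nonneg_left _ (by positivity)
            calc Real.exp (-ρ * ((k:ℝ) * h)) ≤ q ^ k := hE0leQ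
              _ ≤ ((k:ℝ) * h + 1) * q ^ k := le_mul_of_one_le_left hqpos.le (by linarith)
    have g2 : ((k:ℝ) * (2 * ρ ^ 2 * h ^ 2) * Real.exp (-ρ * ((k:ℝ) * h)) +
          ρ * h * Real.exp (-ρ * ((k:ℝ) * h))) * M * h ≤
        M * (2 * ρ ^ 2 + ρ) * h ^ 2 * (((k:ℝ) * h + 1) * q ^ k) := by
      have s12 : ((k:ℝ) * (2 * ρ ^ 2 * h ^ 2) * Real.exp (-ρ * ((k:ℝ) * h)) +
          ρ * h * Real.exp (-ρ * ((k:ℝ) * h))) * h ≤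
          (2 * ρ ^ 2 + ρ) * h ^ 2 * (((k:ℝ) * h + 1) * q ^ k) := by
        linarith [big1, big2]
      calc ((k:ℝ) * (2 * ρ ^ 2 * h ^ 2) * Real.exp (-ρ * ((k:ℝ) * h)) +
            ρ * h * Real.exp (-ρ * ((k:ℝ) * h))) * M * h
          = M * (((k:ℝ) * (2 * ρ ^ 2 * h ^ 2) * Real.exp (-ρ * ((k:ℝ) * h)) +
            ρ * h * Real.exp (-ρ * ((k:ℝ) * h))) * h) := by ring
        _ ≤ M * ((2 * ρ ^ 2 + ρ) * h ^ 2 * (((k:ℝ) * h + 1) * q ^ k)) :=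
            mul_le_mul_of_nonneg_left s12 hM
        _ = M * (2 * ρ ^ 2 + ρ) * h ^ 2 * (((k:ℝ) * h + 1) * q ^ k) := by ring
    have g3 : Real.exp (-ρ * ((k:ℝ) * h)) *
          (F * (A * Real.exp (lam * (((k:ℝ) + 1) * h)) * h)) * h ≤
        F * A * Real.exp lam * h ^ 2 * (((k:ℝ) * h + 1) * q ^ k) := by
      have hmid : Real.exp (-ρ * ((k:ℝ) * h)) * Real.exp (lam * (((k:ℝ) + 1) * h)) ≤
          Real.exp lam * q ^ k := by
        have hsp : Real.exp (lam * (((k:ℝ) + 1) * h)) =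
            Real.exp (lam * h) * Real.exp (lam * ((k:ℝ) * h)) := by
          rw [← Real.exp_add]; congr 1; ring
        rw [hsp]
        calc Real.exp (-ρ * ((k:ℝ) * h)) *
              (Real.exp (lam * h) * Real.exp (lam * ((k:ℝ) * h)))
            = Real.exp (lam * h) *
              (Real.exp (-ρ * ((k:ℝ) * h)) * Real.exp (lam * ((k:ℝ) * h))) := by ring
          _ ≤ Real.exp lam * q ^ k := by
              apply mul_le_mul (Real.exp_le_exp.2 (mul_le_of_le_one_right hlam0 hh1)) hE0lam
                (by positivity) (Real.exp_pos _).le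
      calc Real.exp (-ρ * ((k:ℝ) * h)) *
            (F * (A * Real.exp (lam * (((k:ℝ) + 1) * h)) * h)) * h
          = F * A * h ^ 2 *
            (Real.exp (-ρ * ((k:ℝ) * h)) * Real.exp (lam * (((k:ℝ) + 1) * h))) := by ring
        _ ≤ F * A * h ^ 2 * (Real.exp lam * q ^ k) := by
            apply mul_le_mul_of_nonneg_left hmid (by positivity)
        _ = F * A * Real.exp lam * h ^ 2 * q ^ k := by ring
        _ ≤ F * A * Real.exp lam * h ^ 2 * (((k:ℝ) * h + 1) * q ^ k) := by
            apply mul_le_mul_of_nonneg_left _ (by positivity)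
            exact le_mul_of_one_le_left hqpos.le (by linarith)
    calc (Real.exp (-ρ * ((k:ℝ) * h)) * (F * ‖yseq h k - y ((k:ℝ) * h)‖) +
          ((k:ℝ) * (2 * ρ ^ 2 * h ^ 2) * Real.exp (-ρ * ((k:ℝ) * h)) +
            ρ * h * Real.exp (-ρ * ((k:ℝ) * h))) * M +
          Real.exp (-ρ * ((k:ℝ) * h)) *
            (F * (A * Real.exp (lam * (((k:ℝ) + 1) * h)) * h))) * h
        = Real.exp (-ρ * ((k:ℝ) * h)) * (F * ‖yseq h k - y ((k:ℝ) * h)‖) * h +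
          ((k:ℝ) * (2 * ρ ^ 2 * h ^ 2) * Real.exp (-ρ * ((k:ℝ) * h)) +
            ρ * h * Real.exp (-ρ * ((k:ℝ) * h))) * M * h +
          Real.exp (-ρ * ((k:ℝ) * h)) *
            (F * (A * Real.exp (lam * (((k:ℝ) + 1) * h)) * h)) * h := by ring
      _ ≤ F * C1 * h ^ 2 * (((k:ℝ) * h + 1) * q ^ k) +
          M * (2 * ρ ^ 2 + ρ) * h ^ 2 * (((k:ℝ) * h + 1) * q ^ k) +
          F * A * Real.exp lam * h ^ 2 * (((k:ℝ) * h + 1) * q ^ k) := by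
          linarith [g1, g2, g3]
      _ = D * h ^ 2 * (((k:ℝ) * h + 1) * q ^ k) := by rw [hDdef]; ring
  -- sum up
  have hnormq : ‖q‖ < 1 := by rw [Real.norm_eq_abs, abs_of_pos hq0]; exact hq1
  have hSq : Summable (fun k : ℕ => (k:ℝ) * q ^ k) := by
    have := summable_pow_mul_geometric_of_norm_lt_one 1 hnormq
    simpa using this
  have hSg : Summable (fun k : ℕ => q ^ k) := summable_geometric_of_lt_one hq0.le hq1
  have hSb0 : Summable (fun k : ℕ => ((k:ℝ) * h + 1) * q ^ k) := by
    have hfe : (fun k : ℕ => ((k:ℝ) * h + 1) * q ^ k) =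
        (fun k : ℕ => h * ((k:ℝ) * q ^ k) + q ^ k) := by funext k; ring
    rw [hfe]
    exact (hSq.mul_left h).add hSg
  have hSbound : Summable (fun k : ℕ => D * h ^ 2 * (((k:ℝ) * h + 1) * q ^ k)) :=
    hSb0.mul_left _
  have haS : Summable (fun k : ℕ => h * ((1 - ρ * h) ^ k * f (yseq h k) (Φ (yseq h k)))) :=
    hsummable.mul_left h
  have hbS := hbHasSum.summable
  rw [← hbHasSum.tsum_eq, ← tsum_mul_left, ← Summable.tsum_sub haS hbS]
  have habsS : Summable (fun k : ℕ =>
      |h * ((1 - ρ * h) ^ k * f (yseq h k) (Φ (yseq h k))) -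
        ∫ t in Set.Ioc ((k:ℝ) * h) (((k:ℝ) + 1) * h),
          Real.exp (-ρ * t) * f (y t) (Φ (y t))|) :=
    Summable.of_nonneg_of_le (fun k => abs_nonneg _) hkey hSbound
  -- bounds on the geometric quantities
  have h1q : (0:ℝ) < 1 - q := by linarith
  have hδne : δ' ≠ 0 := ne_of_gt hδ0
  have hhne : h ≠ 0 := ne_of_gt hh
  have hfrac : δ' * h / (1 + δ') ≤ 1 - q := by
    have e1 : 1 + δ' * h ≤ Real.exp (δ' * h) := by
      linarith [Real.add_one_le_exp (δ' * h)]
    have e2 : q * (1 + δ' * h) ≤ 1 := by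
      have h3 : q * (1 + δ' * h) ≤ q * Real.exp (δ' * h) :=
        mul_le_mul_of_nonneg_left e1 hq0.le
      rwa [hqdef, ← Real.exp_add, neg_add_cancel, Real.exp_zero] at h3
    have hd1 : (0:ℝ) < 1 + δ' * h := by positivity
    have hq_le : q ≤ 1 / (1 + δ' * h) := by
      rw [le_div_iff₀ hd1]; linarith
    have hstep : δ' * h / (1 + δ' * h) ≤ 1 - q := by
      have hid : δ' * h / (1 + δ' * h) = 1 - 1 / (1 + δ' * h) := by field_simp; ring
      rw [hid]; linarith
    refine le_trans ?_ hstep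
    apply div_le_div_of_nonneg_left (by positivity) hd1
    nlinarith
  have htsum_eq : (∑' k : ℕ, (((k:ℝ) * h + 1) * q ^ k)) =
      h * (q / (1 - q) ^ 2) + (1 - q)⁻¹ := by
    rw [tsum_congr (fun k : ℕ =>
        show ((k:ℝ) * h + 1) * q ^ k = h * ((k:ℝ) * q ^ k) + q ^ k by ring),
      Summable.tsum_add (hSq.mul_left h) hSg, tsum_mul_left,
      tsum_geometric_of_lt_one hq0.le hq1, tsum_coe_mul_geometric_of_norm_lt_one hnormq]
  have hfinal1 : (1 - q)⁻¹ ≤ (1 + δ') / (δ' * h) := by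
    calc (1 - q)⁻¹ ≤ (δ' * h / (1 + δ'))⁻¹ :=
          inv_anti₀ (by positivity) hfrac
      _ = (1 + δ') / (δ' * h) := by rw [inv_div]
  have hfinal2 : q / (1 - q) ^ 2 ≤ ((1 + δ') / (δ' * h)) ^ 2 := by
    calc q / (1 - q) ^ 2 ≤ 1 / (1 - q) ^ 2 := by gcongr
      _ = ((1 - q)⁻¹) ^ 2 := by rw [one_div, ← inv_pow]
      _ ≤ ((1 + δ') / (δ' * h)) ^ 2 :=
          pow_le_pow_left₀ (inv_nonneg.2 h1q.le) hfinal1 2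
  have hS : (∑' k : ℕ, (((k:ℝ) * h + 1) * q ^ k)) ≤
      (1 + δ') ^ 2 / (δ' ^ 2 * h) + (1 + δ') / (δ' * h) := by
    rw [htsum_eq]
    have h5 : h * (q / (1 - q) ^ 2) ≤ h * ((1 + δ') / (δ' * h)) ^ 2 :=
      mul_le_mul_of_nonneg_left hfinal2 hh.le
    have hid4 : h * ((1 + δ') / (δ' * h)) ^ 2 = (1 + δ') ^ 2 / (δ' ^ 2 * h) := by
      field_simp
    rw [hid4] at h5
    linarith [hfinal1]
  calc |∑' k : ℕ, (h * ((1 - ρ * h) ^ k * f (yseq h k) (Φ (yseq h k))) -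
        ∫ t in Set.Ioc ((k:ℝ) * h) (((k:ℝ) + 1) * h),
          Real.exp (-ρ * t) * f (y t) (Φ (y t)))|
      ≤ ∑' k : ℕ, |h * ((1 - ρ * h) ^ k * f (yseq h k) (Φ (yseq h k))) -
        ∫ t in Set.Ioc ((k:ℝ) * h) (((k:ℝ) + 1) * h),
          Real.exp (-ρ * t) * f (y t) (Φ (y t))| := by
        exact norm_tsum_le_tsum_norm (f := fun k : ℕ =>
          h * ((1 - ρ * h) ^ k * f (yseq h k) (Φ (yseq h k))) -
            ∫ t in Set.Ioc ((k:ℝ) * h) (((k:ℝ) + 1) * h),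
              Real.exp (-ρ * t) * f (y t) (Φ (y t))) habsS
    _ ≤ ∑' k : ℕ, D * h ^ 2 * (((k:ℝ) * h + 1) * q ^ k) :=
        Summable.tsum_le_tsum hkey habsS hSbound
    _ = D * h ^ 2 * ∑' k : ℕ, (((k:ℝ) * h + 1) * q ^ k) := tsum_mul_left
    _ ≤ D * h ^ 2 * ((1 + δ') ^ 2 / (δ' ^ 2 * h) + (1 + δ') / (δ' * h)) :=
        mul_le_mul_of_nonneg_left hS (by positivity)
    _ = D * ((1 + δ') ^ 2 / δ' ^ 2 + (1 + δ') / δ') * h := by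
        field_simp
    _ ≤ max 1 (D * ((1 + δ') ^ 2 / δ' ^ 2 + (1 + δ') / δ')) * h :=
        mul_le_mul_of_nonneg_right (le_max_right _ _) hh.le
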